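/- Let A be an additive category such that for all objects X, Y the abelian group of morphisms Hom(X, Y) is finitely generated. If X and Y are stably isomorphic objects of A (i.e., X ⊕ Z ≅ Y ⊕ Z for some object Z), then for every prime p the 𝔽ₚ-vector spaces End(X) ⊗_ℤ 𝔽ₚ and Hom(X, Y) ⊗_ℤ 𝔽ₚ have the same dimension; consequently the abelian groups End(X) and Hom(X, Y) have the same smallest number of generators. -/

import Mathlib

open CategoryTheory CategoryTheory.Limits TensorProduct

attribute [local instance] CategoryTheory.Limits.hasBinaryBiproducts_of_finite_biproducts


open Pointwise

/-! ### Auxiliary: `ZMod n`-linear upgrades and the mod-`p` dimension `deltaDim` -/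

/-- Upgrade an additive equivalence between `ZMod n`-modules to a linear equivalence. -/
def AddEquiv.toZModLinearEquiv (n : ℕ) {M N : Type*} [AddCommGroup M] [AddCommGroup N]
    [Module (ZMod n) M] [Module (ZMod n) N] (e : M ≃+ N) : M ≃ₗ[ZMod n] N :=
  { e with map_smul' := fun c x => ZMod.map_smul e.toAddMonoidHom c x }

/-- The dimension of `ZMod p ⊗ M` over `ZMod p`. -/
noncomputable def deltaDim (p : ℕ) (M : Type*) [AddCommGroup M] : ℕ :=
  Module.finrank (ZMod p) (ZMod p ⊗[ℤ] M)

lemma deltaDim_congr (p : ℕ) {M N : Type*} [AddCommGroup M] [AddCommGroup N] (e : M ≃+ N) :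
    deltaDim p M = deltaDim p N :=
  ((TensorProduct.congr (LinearEquiv.refl ℤ (ZMod p))
    e.toIntLinearEquiv).toAddEquiv.toZModLinearEquiv p).finrank_eq

lemma deltaDim_prod (p : ℕ) (hp : p.Prime) (M N : Type*) [AddCommGroup M] [AddCommGroup N]
    [AddGroup.FG M] [AddGroup.FG N] :
    deltaDim p (M × N) = deltaDim p M + deltaDim p N := by
  haveI : Fact p.Prime := ⟨hp⟩
  haveI : Module.Finite ℤ M := Module.Finite.iff_addGroup_fg.mpr ‹_›
  haveI : Module.Finite ℤ N := Module.Finite.iff_addGroup_fg.mpr ‹_›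
  have e := ((TensorProduct.prodRight ℤ (ZMod p) (ZMod p) M N).toAddEquiv.toZModLinearEquiv p)
  rw [deltaDim, e.finrank_eq, Module.finrank_prod]
  rfl

lemma deltaDim_pi (p : ℕ) (hp : p.Prime) {ι : Type} [Fintype ι] (M : ι → Type*)
    [∀ i, AddCommGroup (M i)] [hFG : ∀ i, AddGroup.FG (M i)] :
    deltaDim p (∀ i, M i) = ∑ i, deltaDim p (M i) := by
  classical
  haveI : Fact p.Prime := ⟨hp⟩
  haveI : ∀ i, Module.Finite ℤ (M i) := fun i => Module.Finite.iff_addGroup_fg.mpr (hFG i)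
  rw [deltaDim, (TensorProduct.piRight ℤ (ZMod p) (ZMod p) M).finrank_eq,
    Module.finrank_pi_fintype]
  rfl

lemma deltaDim_zmod (p : ℕ) (hp : p.Prime) (n : ℕ) :
    deltaDim p (ZMod n) = if p ∣ n then 1 else 0 := by
  haveI : Fact p.Prime := ⟨hp⟩
  rw [deltaDim_congr p (Int.quotientSpanNatEquivZMod n).symm.toAddEquiv]
  have E2 := TensorProduct.tensorQuotEquivQuotSMul (ZMod p) (Ideal.span {(n : ℤ)})
  have hsmul : (Ideal.span {(n : ℤ)} • (⊤ : Submodule ℤ (ZMod p))) = (n : ℤ) • ⊤ :=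
    Submodule.ideal_span_singleton_smul _ _
  by_cases h : p ∣ n
  · have hbot : (Ideal.span {(n : ℤ)} • (⊤ : Submodule ℤ (ZMod p))) = ⊥ := by
      rw [hsmul, eq_bot_iff]
      rintro x hx
      rw [← SetLike.mem_coe, Submodule.coe_pointwise_smul] at hx
      obtain ⟨y, -, rfl⟩ := Set.mem_smul_set.mp hx
      have h0 : (n : ZMod p) = 0 := (ZMod.natCast_eq_zero_iff n p).mpr h
      simp [zsmul_eq_mul, h0]
    have E3 := E2.trans (Submodule.quotEquivOfEqBot _ hbot)
    rw [if_pos h]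
    rw [deltaDim, (E3.toAddEquiv.toZModLinearEquiv p).finrank_eq, Module.finrank_self]
  · have hn : (n : ZMod p) ≠ 0 := fun h0 => h ((ZMod.natCast_eq_zero_iff n p).mp h0)
    have htop : (Ideal.span {(n : ℤ)} • (⊤ : Submodule ℤ (ZMod p))) = ⊤ := by
      rw [hsmul, eq_top_iff]
      intro x _
      have hx : x = (n : ℤ) • ((n : ZMod p)⁻¹ * x) := by
        rw [zsmul_eq_mul, Int.cast_natCast, ← mul_assoc, mul_inv_cancel₀ hn, one_mul]
      rw [hx]
      exact Submodule.smul_mem_pointwise_smul _ _ _ Submodule.mem_top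
    have : Subsingleton (ZMod p ⊗[ℤ] (ℤ ⧸ Ideal.span {(n : ℤ)})) := by
      have := (Submodule.Quotient.subsingleton_iff).mpr htop
      exact E2.toEquiv.subsingleton
    rw [if_neg h]
    exact Module.finrank_zero_of_subsingleton

/-! ### Auxiliary: minimal number of generators -/

lemma zmod_closure_one (n : ℕ) : AddSubgroup.closure ({1} : Set (ZMod n)) = ⊤ := by
  rw [eq_top_iff]
  intro x _
  rw [AddSubgroup.mem_closure_singleton]
  cases n with
  | zero => exact ⟨x, mul_one (x : ℤ)⟩
  | succ m => exact ⟨(x.val : ℤ), by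
      rw [zsmul_eq_mul, mul_one]
      push_cast [ZMod.natCast_val, ZMod.cast_id]
      rfl⟩

instance zmod_fg (n : ℕ) : AddGroup.FG (ZMod n) :=
  ⟨⟨{1}, by simpa using zmod_closure_one n⟩⟩

lemma addGroupRank_zmod_le (n : ℕ) : AddGroup.rank (ZMod n) ≤ 1 := by
  have := AddGroup.rank_le (S := ({1} : Finset (ZMod n))) (by simpa using zmod_closure_one n)
  simpa using this

instance fg_prod' (G H : Type*) [AddCommGroup G] [AddCommGroup H] [AddGroup.FG G]
    [AddGroup.FG H] : AddGroup.FG (G × H) := by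
  haveI : Module.Finite ℤ G := Module.Finite.iff_addGroup_fg.mpr ‹_›
  haveI : Module.Finite ℤ H := Module.Finite.iff_addGroup_fg.mpr ‹_›
  exact Module.Finite.iff_addGroup_fg.mp inferInstance

instance pi_fg {ι : Type*} [Finite ι] (M : ι → Type*) [∀ i, AddCommGroup (M i)]
    [hFG : ∀ i, AddGroup.FG (M i)] : AddGroup.FG (∀ i, M i) := by
  haveI : ∀ i, Module.Finite ℤ (M i) := fun i => Module.Finite.iff_addGroup_fg.mpr (hFG i)
  exact Module.Finite.iff_addGroup_fg.mp inferInstance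

lemma addGroupRank_prod_le (G H : Type*) [AddCommGroup G] [AddCommGroup H] [AddGroup.FG G]
    [AddGroup.FG H] : AddGroup.rank (G × H) ≤ AddGroup.rank G + AddGroup.rank H := by
  classical
  obtain ⟨S, hScard, hS⟩ := AddGroup.rank_spec G
  obtain ⟨T, hTcard, hT⟩ := AddGroup.rank_spec H
  set U : Finset (G × H) := S.image (fun a => (a, (0:H))) ∪ T.image (fun b => ((0:G), b)) with hU
  have hUclos : AddSubgroup.closure (U : Set (G × H)) = ⊤ := by
    rw [eq_top_iff]
    rintro ⟨a, b⟩ -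
    have hab : (a, b) = (a, 0) + (0, b) := by simp
    have h1 : (a, (0:H)) ∈ AddSubgroup.closure (U : Set (G × H)) := by
      have : (a, (0:H)) ∈ (AddSubgroup.closure (S : Set G)).map (AddMonoidHom.inl G H) :=
        ⟨a, by simp [hS]⟩
      rw [AddMonoidHom.map_closure] at this
      refine AddSubgroup.closure_mono ?_ this
      intro x hx
      simp only [hU, Finset.coe_union, Finset.coe_image, Set.mem_union]
      exact Or.inl (by simpa using hx)
    have h2 : ((0:G), b) ∈ AddSubgroup.closure (U : Set (G × H)) := by
      have : ((0:G), b) ∈ (AddSubgroup.closure (T : Set H)).map (AddMonoidHom.inr G H) :=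
        ⟨b, by simp [hT]⟩
      rw [AddMonoidHom.map_closure] at this
      refine AddSubgroup.closure_mono ?_ this
      intro x hx
      simp only [hU, Finset.coe_union, Finset.coe_image, Set.mem_union]
      exact Or.inr (by simpa using hx)
    rw [hab]
    exact add_mem h1 h2
  calc AddGroup.rank (G × H) ≤ U.card := AddGroup.rank_le hUclos
    _ ≤ S.card + T.card := le_trans (Finset.card_union_le _ _)
        (by gcongr <;> exact Finset.card_image_le)
    _ = _ := by rw [hScard, hTcard]

lemma addGroupRank_congr' {G H : Type*} [AddGroup G] [AddGroup H] [AddGroup.FG G] [AddGroup.FG H]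
    (e : G ≃+ H) : AddGroup.rank G = AddGroup.rank H :=
  AddGroup.rank_congr e

lemma sInf_eq_addGroupRank (G : Type*) [AddGroup G] [AddGroup.FG G] :
    sInf {n : ℕ | ∃ S : Finset G, S.card = n ∧ AddSubgroup.closure (S : Set G) = ⊤}
      = AddGroup.rank G := by
  apply le_antisymm
  · obtain ⟨S, h1, h2⟩ := AddGroup.rank_spec G
    exact Nat.sInf_le ⟨S, h1, h2⟩
  · have hne : {n : ℕ | ∃ S : Finset G, S.card = n ∧
        AddSubgroup.closure (S : Set G) = ⊤}.Nonempty := by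
      obtain ⟨S, h1, h2⟩ := AddGroup.rank_spec G
      exact ⟨S.card, S, rfl, h2⟩
    obtain ⟨S, h1, h2⟩ := Nat.sInf_mem hne
    rw [← h1]
    exact AddGroup.rank_le h2

lemma deltaDim_le_rank (p : ℕ) (hp : p.Prime) (M : Type*) [AddCommGroup M] [AddGroup.FG M] :
    deltaDim p M ≤ AddGroup.rank M := by
  classical
  haveI : Fact p.Prime := ⟨hp⟩
  obtain ⟨S, hcard, hclos⟩ := AddGroup.rank_spec M
  set f : M →+ ZMod p ⊗[ℤ] M := (TensorProduct.mk ℤ (ZMod p) M 1).toAddMonoidHom with hf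
  set T : Finset (ZMod p ⊗[ℤ] M) := S.image f with hT
  have hspan : Submodule.span (ZMod p) (T : Set (ZMod p ⊗[ℤ] M)) = ⊤ := by
    rw [eq_top_iff]
    intro x _
    have key : ∀ m : M, f m ∈ Submodule.span (ZMod p) (T : Set (ZMod p ⊗[ℤ] M)) := by
      intro m
      have : m ∈ AddSubgroup.closure (S : Set M) := by rw [hclos]; trivial
      refine AddSubgroup.closure_induction ?_ ?_ ?_ ?_ this
      · intro s hs
        refine Submodule.subset_span ?_
        simp only [hT, Finset.coe_image, Set.mem_image, Finset.mem_coe]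
        exact ⟨s, hs, rfl⟩
      · simpa using Submodule.zero_mem _
      · intro a b _ _ ha hb
        rw [map_add]; exact Submodule.add_mem _ ha hb
      · intro a _ ha
        rw [map_neg]; exact Submodule.neg_mem _ ha
    induction x using TensorProduct.induction_on with
    | zero => exact Submodule.zero_mem _
    | tmul c m =>
        have : c ⊗ₜ[ℤ] m = c • ((1 : ZMod p) ⊗ₜ[ℤ] m) := by
          rw [TensorProduct.smul_tmul', smul_eq_mul, mul_one]
        rw [this]
        exact Submodule.smul_mem _ _ (key m)
    | add a b ha hb => exact Submodule.add_mem _ (ha trivial) (hb trivial)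
  calc deltaDim p M ≤ T.card := by
        rw [deltaDim]
        have := finrank_le_of_span_eq_top (v := fun t : T => (t : ZMod p ⊗[ℤ] M))
          (by rw [show (Set.range fun t : T => (t : ZMod p ⊗[ℤ] M))
                = (T : Set (ZMod p ⊗[ℤ] M)) from Subtype.range_coe]; exact hspan)
        simpa [Fintype.card_coe] using this
    _ ≤ S.card := Finset.card_image_le
    _ = _ := hcard

/-! ### The key induction: rank of a finite product of cyclic groups -/

/-- Splitting of a finite product along a predicate, as an `AddEquiv`. -/
def piSplitAddEquiv {ι : Type*} (p : ι → Prop) [DecidablePred p] (M : ι → Type*)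
    [∀ i, AddCommGroup (M i)] :
    (∀ i, M i) ≃+ (∀ i : {x // p x}, M i) × (∀ i : {x // ¬ p x}, M i) :=
  AddEquiv.mk' (Equiv.piEquivPiSubtypeProd p M) (fun _ _ => rfl)

lemma rank_subsingleton_le {G : Type*} [AddCommGroup G] [AddGroup.FG G] [Subsingleton G]
    (m : ℕ) : AddGroup.rank G ≤ m := by
  have h : AddSubgroup.closure ((↑(∅ : Finset G)) : Set G) = ⊤ := by
    rw [eq_top_iff]
    intro x _
    have : x = 0 := Subsingleton.elim _ _
    simp [this, AddSubgroup.zero_mem]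
  have h0 : AddGroup.rank G = 0 := by simpa using AddGroup.rank_le h
  omega

theorem rank_pi_le (m : ℕ) : ∀ (ι : Type) (_ : Fintype ι) (n : ι → ℕ),
    (∀ i, n i = 0 ∨ ∃ q k, Nat.Prime q ∧ n i = q ^ k) →
    (∀ r : ℕ, r.Prime → (Finset.univ.filter (fun i => r ∣ n i)).card ≤ m) →
    AddGroup.rank (∀ i, ZMod (n i)) ≤ m := by
  induction m with
  | zero =>
    intro ι _ n _ hcount
    have h1 : ∀ i, n i = 1 := by
      intro i
      by_contra h
      obtain ⟨r, hr, hrd⟩ := Nat.exists_prime_and_dvd h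
      have := hcount r hr
      have hi : i ∈ Finset.univ.filter (fun i => r ∣ n i) := by simp [hrd]
      have : 0 < (Finset.univ.filter (fun i => r ∣ n i)).card := Finset.card_pos.mpr ⟨i, hi⟩
      omega
    haveI : ∀ i, Subsingleton (ZMod (n i)) := fun i => by rw [h1 i]; infer_instance
    exact rank_subsingleton_le 0
  | succ m IH =>
    intro ι _ n hpow hcount
    classical
    suffices h : ∃ T : Finset ι,
        AddGroup.rank (∀ i : {x // x ∈ T}, ZMod (n i.1)) ≤ 1 ∧
        (∀ r : ℕ, r.Prime →
          ((Finset.univ : Finset {x // x ∉ T}).filter (fun i => r ∣ n i.1)).card ≤ m) by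
      obtain ⟨T, hT1, hT2⟩ := h
      have E := piSplitAddEquiv (fun i => i ∈ T) (fun i => ZMod (n i))
      rw [addGroupRank_congr' E]
      refine le_trans (addGroupRank_prod_le _ _) ?_
      have h2 : AddGroup.rank (∀ i : {x // x ∉ T}, ZMod (n i.1)) ≤ m :=
        IH {x // x ∉ T} inferInstance (fun i => n i.1) (fun i => hpow i.1) hT2
      omega
    by_cases hex : ∃ i₀, n i₀ = 0
    · obtain ⟨i₀, hi₀⟩ := hex
      refine ⟨{i₀}, ?_, ?_⟩
      · haveI : Unique {x // x ∈ ({i₀} : Finset ι)} :=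
          ⟨⟨⟨i₀, Finset.mem_singleton_self i₀⟩⟩, by rintro ⟨x, hx⟩; ext; simpa using hx⟩
        rw [addGroupRank_congr'
          (AddEquiv.piUnique (fun i : {x // x ∈ ({i₀} : Finset ι)} => ZMod (n i.1)))]
        exact addGroupRank_zmod_le _
      · intro r hr
        have hi₀mem : i₀ ∈ Finset.univ.filter (fun i => r ∣ n i) := by simp [hi₀]
        calc ((Finset.univ : Finset {x // x ∉ ({i₀} : Finset ι)}).filter
            (fun i => r ∣ n i.1)).card
            ≤ ((Finset.univ.filter (fun i => r ∣ n i)).erase i₀).card := by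
              apply Finset.card_le_card_of_injOn (fun x => x.1)
              · rintro ⟨a, haT⟩ hmem
                simp only [Finset.coe_filter, Finset.mem_filter, Finset.mem_univ, true_and, Set.mem_setOf_eq] at hmem
                refine Finset.mem_erase.mpr ⟨by simpa using haT, by simp [hmem]⟩
              · rintro ⟨a, _⟩ - ⟨b, _⟩ - hab
                exact Subtype.ext hab
          _ = (Finset.univ.filter (fun i => r ∣ n i)).card - 1 :=
              Finset.card_erase_of_mem hi₀mem
          _ ≤ m := by have := hcount r hr; omega
    · push_neg at hex
      rcases isEmpty_or_nonempty ι with hempty | hempty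
      · refine ⟨∅, ?_, ?_⟩
        · haveI : IsEmpty {x // x ∈ (∅ : Finset ι)} := by
            constructor; rintro ⟨x, hx⟩; simp at hx
          exact rank_subsingleton_le 1
        · intro r hr
          have : ((Finset.univ : Finset {x // x ∉ (∅ : Finset ι)}).filter
              (fun i => r ∣ n i.1)) = ∅ := by
            apply Finset.eq_empty_of_forall_notMem
            rintro ⟨x, -⟩
            exact absurd trivial (fun _ => hempty.false x)
          simp [this]
      · haveI : Inhabited ι := ⟨Classical.choice hempty⟩
        set s := Finset.univ.filter (fun i => n i ≠ 1) with hs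
        set P := s.image (fun i => (n i).minFac) with hP
        have pick_spec : ∀ r ∈ P, ∃ i, i ∈ s ∧ (n i).minFac = r := by
          intro r hr
          obtain ⟨i, hi, hi2⟩ := Finset.mem_image.mp hr
          exact ⟨i, hi, hi2⟩
        choose! pick hpick1 hpick2 using pick_spec
        set T := P.image pick with hTdef
        have minfac_eq : ∀ i, n i ≠ 1 → ∃ q k, Nat.Prime q ∧ n i = q ^ k ∧ k ≠ 0 ∧
            (n i).minFac = q := by
          intro i hi1
          obtain ⟨q, k, hq, hn⟩ := (hpow i).resolve_left (hex i)
          have hk : k ≠ 0 := by rintro rfl; rw [hn, pow_zero] at hi1; exact hi1 rfl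
          exact ⟨q, k, hq, hn, hk, by rw [hn, Nat.pow_minFac hk, hq.minFac_eq]⟩
        have key : ∀ j ∈ T, n j ≠ 1 ∧ (n j).minFac ∈ P ∧ pick ((n j).minFac) = j := by
          intro j hj
          obtain ⟨r, hr, rfl⟩ := Finset.mem_image.mp hj
          have h1 := hpick1 r hr
          have h2 := hpick2 r hr
          have hns : n (pick r) ≠ 1 := (Finset.mem_filter.mp h1).2
          exact ⟨hns, by rw [h2]; exact hr, by rw [h2]⟩
        refine ⟨T, ?_, ?_⟩
        · have hcop : Pairwise (Function.onFun Nat.Coprime (fun j : {x // x ∈ T} => n j.1)) := by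
            rintro ⟨a, ha⟩ ⟨b, hb⟩ hab
            obtain ⟨ha1, ha2, ha3⟩ := key a ha
            obtain ⟨hb1, hb2, hb3⟩ := key b hb
            obtain ⟨qa, ka, hqa, hna, hka, hma⟩ := minfac_eq a ha1
            obtain ⟨qb, kb, hqb, hnb, hkb, hmb⟩ := minfac_eq b hb1
            have hne : qa ≠ qb := by
              rintro rfl
              apply hab
              apply Subtype.ext
              have : a = b := by rw [← ha3, ← hb3, hma, hmb]
              exact this
            simp only [Function.onFun]
            rw [hna, hnb]
            exact Nat.Coprime.pow _ _ ((Nat.coprime_primes hqa hqb).mpr hne)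
          have E := ZMod.prodEquivPi (fun j : {x // x ∈ T} => n j.1) hcop
          rw [addGroupRank_congr' E.toAddEquiv.symm]
          exact addGroupRank_zmod_le _
        · intro r hr
          rcases Finset.eq_empty_or_nonempty
            ((Finset.univ : Finset {x // x ∉ T}).filter (fun i => r ∣ n i.1)) with hC | hC
          · simp [hC]
          · obtain ⟨⟨i, hiT⟩, hiC⟩ := hC
            have hdvd : r ∣ n i := (Finset.mem_filter.mp hiC).2
            have hni1 : n i ≠ 1 := by
              intro h1
              rw [h1] at hdvd
              exact hr.one_lt.ne' (Nat.dvd_one.mp hdvd)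
            obtain ⟨q, k, hq, hn, hk, hm⟩ := minfac_eq i hni1
            have hrq : r = q := by
              have : r ∣ q ^ k := hn ▸ hdvd
              exact (Nat.prime_dvd_prime_iff_eq hr hq).mp (hr.dvd_of_dvd_pow this)
            have hiS : i ∈ s := Finset.mem_filter.mpr ⟨Finset.mem_univ _, hni1⟩
            have hrP : r ∈ P := Finset.mem_image.mpr ⟨i, hiS, by rw [hm, hrq]⟩
            have hj₀T : pick r ∈ T := Finset.mem_image_of_mem pick hrP
            have hj₀d : r ∣ n (pick r) := by
              have hd := Nat.minFac_dvd (n (pick r))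
              rwa [hpick2 r hrP] at hd
            have hj₀mem : pick r ∈ Finset.univ.filter (fun i => r ∣ n i) := by simp [hj₀d]
            calc ((Finset.univ : Finset {x // x ∉ T}).filter (fun i => r ∣ n i.1)).card
                ≤ ((Finset.univ.filter (fun i => r ∣ n i)).erase (pick r)).card := by
                  apply Finset.card_le_card_of_injOn (fun x => x.1)
                  · rintro ⟨a, haT⟩ hmem
                    simp only [Finset.coe_filter, Finset.mem_filter, Finset.mem_univ, true_and, Set.mem_setOf_eq] at hmem
                    refine Finset.mem_erase.mpr ⟨fun h => haT (by rw [show a = pick r from h]; exact hj₀T), by simp [hmem]⟩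
                  · rintro ⟨a, _⟩ - ⟨b, _⟩ - hab
                    exact Subtype.ext hab
              _ = (Finset.univ.filter (fun i => r ∣ n i)).card - 1 :=
                  Finset.card_erase_of_mem hj₀mem
              _ ≤ m := by have := hcount r hr; omega

/-! ### Existence of a prime achieving the rank -/

lemma model_decomp (M : Type*) [AddCommGroup M] [AddGroup.FG M] :
    ∃ (k : ℕ) (ι : Type) (_ : Fintype ι) (N : Fin k ⊕ ι → ℕ),
      (∀ j, N j = 0 ∨ ∃ q l, Nat.Prime q ∧ N j = q ^ l) ∧
      Nonempty (M ≃+ ∀ j, ZMod (N j)) := by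
  obtain ⟨r, ι, fι, q, hq, e, ⟨f⟩⟩ := AddCommGroup.equiv_free_prod_directSum_zmod M
  refine ⟨r, ι, fι, Sum.elim (fun _ => 0) (fun i => q i ^ e i),
    fun j => by cases j with
      | inl a => exact Or.inl rfl
      | inr i => exact Or.inr ⟨q i, e i, hq i, rfl⟩, ⟨?_⟩⟩
  refine f.trans ?_
  refine AddEquiv.trans (AddEquiv.prodCongr
    (Finsupp.linearEquivFunOnFinite ℤ ℤ (Fin r)).toAddEquiv
    (DirectSum.addEquivProd (fun i => ZMod (q i ^ e i)))) ?_
  exact (AddEquiv.mk' (Equiv.sumPiEquivProdPi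
    (fun j => ZMod (Sum.elim (fun _ => 0) (fun i => q i ^ e i) j))) (fun _ _ => rfl)).symm

lemma exists_prime_rank_le (M : Type*) [AddCommGroup M] [AddGroup.FG M] :
    ∃ p : ℕ, p.Prime ∧ AddGroup.rank M ≤ deltaDim p M := by
  classical
  obtain ⟨k, ι, fι, N, hpow, ⟨F⟩⟩ := model_decomp M
  haveI : AddGroup.FG (∀ j, ZMod (N j)) := inferInstance
  set c : ℕ → ℕ := fun t => (Finset.univ.filter (fun j => t ∣ N j)).card with hc
  set Q : Finset ℕ := insert 2
    ((Finset.univ.filter (fun j => N j ≠ 0 ∧ N j ≠ 1)).image (fun j => (N j).minFac)) with hQ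
  have hQp : ∀ t ∈ Q, t.Prime := by
    intro t ht
    rcases Finset.mem_insert.mp ht with h | h
    · rw [h]; exact Nat.prime_two
    · obtain ⟨j, hj, rfl⟩ := Finset.mem_image.mp h
      exact Nat.minFac_prime (Finset.mem_filter.mp hj).2.2
  obtain ⟨p₀, hp₀Q, hmax⟩ := Finset.exists_max_image Q c ⟨2, Finset.mem_insert_self 2 _⟩
  have hp₀ : p₀.Prime := hQp _ hp₀Q
  have hall : ∀ t : ℕ, t.Prime → c t ≤ c p₀ := by
    intro t ht
    by_cases htQ : t ∈ Q
    · exact hmax t htQ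
    · have hsub : Finset.univ.filter (fun j => t ∣ N j)
          ⊆ Finset.univ.filter (fun j => 2 ∣ N j) := by
        intro j hj
        have hdvd : t ∣ N j := (Finset.mem_filter.mp hj).2
        have hNj : N j = 0 := by
          by_contra h0
          obtain ⟨q, l, hq, hql⟩ := (hpow j).resolve_left h0
          have hl : l ≠ 0 := by
            rintro rfl
            rw [hql, pow_zero] at hdvd
            exact ht.one_lt.ne' (Nat.dvd_one.mp hdvd)
          have h1 : N j ≠ 1 := by
            rw [hql]
            exact (Nat.one_lt_pow hl hq.one_lt).ne'
          have htq : t = q := by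
            have : t ∣ q ^ l := hql ▸ hdvd
            exact (Nat.prime_dvd_prime_iff_eq ht hq).mp (ht.dvd_of_dvd_pow this)
          apply htQ
          rw [hQ]
          refine Finset.mem_insert_of_mem (Finset.mem_image.mpr
            ⟨j, Finset.mem_filter.mpr ⟨Finset.mem_univ _, h0, h1⟩, ?_⟩)
          rw [hql, Nat.pow_minFac hl, hq.minFac_eq, htq]
        exact Finset.mem_filter.mpr ⟨Finset.mem_univ _, by rw [hNj]; exact dvd_zero 2⟩
      calc c t ≤ c 2 := Finset.card_le_card hsub
        _ ≤ c p₀ := hmax 2 (Finset.mem_insert_self 2 _)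
  have h1 : AddGroup.rank (∀ j, ZMod (N j)) ≤ c p₀ :=
    rank_pi_le (c p₀) _ inferInstance N hpow (fun t ht => hall t ht)
  have h2 : deltaDim p₀ M = c p₀ := by
    rw [deltaDim_congr p₀ F, deltaDim_pi p₀ hp₀]
    simp_rw [deltaDim_zmod p₀ hp₀]
    simp [hc, Finset.sum_boole]
  refine ⟨p₀, hp₀, ?_⟩
  rw [addGroupRank_congr' F, h2]
  exact h1

/-! ### Categorical part -/

open CategoryTheory CategoryTheory.Limits

attribute [local instance] CategoryTheory.Limits.hasBinaryBiproducts_of_finite_biproducts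

section Cat

variable {A : Type*} [Category A] [Preadditive A] [HasFiniteBiproducts A]

/-- Maps out of a biproduct are pairs of maps. -/
noncomputable def homBiprodOut (X Z W : A) : ((X ⊞ Z) ⟶ W) ≃+ ((X ⟶ W) × (Z ⟶ W)) where
  toFun f := (biprod.inl ≫ f, biprod.inr ≫ f)
  invFun g := biprod.desc g.1 g.2
  left_inv f := by apply biprod.hom_ext' <;> simp
  right_inv g := by ext <;> simp
  map_add' f g := by ext <;> simp

/-- Maps into a biproduct are pairs of maps. -/
noncomputable def homBiprodIn (W X Z : A) : (W ⟶ X ⊞ Z) ≃+ ((W ⟶ X) × (W ⟶ Z)) where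
  toFun f := (f ≫ biprod.fst, f ≫ biprod.snd)
  invFun g := biprod.lift g.1 g.2
  left_inv f := by apply biprod.hom_ext <;> simp
  right_inv g := by ext <;> simp
  map_add' f g := by ext <;> simp

/-- Post-composition with an isomorphism. -/
def homPostcomp (W : A) {P Q : A} (e : P ≅ Q) : (W ⟶ P) ≃+ (W ⟶ Q) where
  toFun f := f ≫ e.hom
  invFun g := g ≫ e.inv
  left_inv f := by simp
  right_inv g := by simp
  map_add' f g := by simp

end Cat


/-- In an additive category with finitely generated Hom groups, if `X` and `Y`
are stably isomorphic then for every prime `p` the `𝔽ₚ`-vector spaces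
`End(X) ⊗_ℤ 𝔽ₚ` and `Hom(X,Y) ⊗_ℤ 𝔽ₚ` have the same dimension; consequently the
abelian groups `End(X)` and `Hom(X,Y)` have the same smallest number of
generators. -/
theorem stmt_14 {A : Type*} [Category A] [Preadditive A] [HasFiniteBiproducts A]
    (hfg : ∀ X Y : A, AddGroup.FG (X ⟶ Y))
    (X Y Z : A) (e : X ⊞ Z ≅ Y ⊞ Z) :
    (∀ p : ℕ, p.Prime →
        Module.finrank (ZMod p) (ZMod p ⊗[ℤ] (X ⟶ X))
          = Module.finrank (ZMod p) (ZMod p ⊗[ℤ] (X ⟶ Y)))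
      ∧ sInf {n : ℕ | ∃ S : Finset (X ⟶ X), S.card = n ∧
            AddSubgroup.closure (S : Set (X ⟶ X)) = ⊤}
        = sInf {n : ℕ | ∃ S : Finset (X ⟶ Y), S.card = n ∧
            AddSubgroup.closure (S : Set (X ⟶ Y)) = ⊤} := by
  haveI : AddGroup.FG (X ⟶ X) := hfg X X
  haveI : AddGroup.FG (X ⟶ Y) := hfg X Y
  haveI : AddGroup.FG (X ⟶ Z) := hfg X Z
  haveI : AddGroup.FG (Z ⟶ X) := hfg Z X
  haveI : AddGroup.FG (Z ⟶ Y) := hfg Z Y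
  haveI : AddGroup.FG (Z ⟶ Z) := hfg Z Z
  haveI : AddGroup.FG ((X ⊞ Z) ⟶ X) := hfg _ _
  haveI : AddGroup.FG ((X ⊞ Z) ⟶ Y) := hfg _ _
  haveI : AddGroup.FG ((X ⊞ Z) ⟶ Z) := hfg _ _
  have key : ∀ p : ℕ, p.Prime → deltaDim p (X ⟶ X) = deltaDim p (X ⟶ Y) := by
    intro p hp
    have eq3 : deltaDim p ((X ⊞ Z) ⟶ (X ⊞ Z)) = deltaDim p ((X ⊞ Z) ⟶ (Y ⊞ Z)) :=
      deltaDim_congr p (homPostcomp (X ⊞ Z) e)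
    have eq1 : deltaDim p ((X ⊞ Z) ⟶ (X ⊞ Z))
        = deltaDim p (X ⟶ X) + deltaDim p (Z ⟶ X)
          + (deltaDim p (X ⟶ Z) + deltaDim p (Z ⟶ Z)) := by
      rw [deltaDim_congr p (homBiprodIn (X ⊞ Z) X Z), deltaDim_prod p hp,
        deltaDim_congr p (homBiprodOut X Z X), deltaDim_congr p (homBiprodOut X Z Z),
        deltaDim_prod p hp, deltaDim_prod p hp]
    have eq2 : deltaDim p ((X ⊞ Z) ⟶ (Y ⊞ Z))
        = deltaDim p (X ⟶ Y) + deltaDim p (Z ⟶ Y)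
          + (deltaDim p (X ⟶ Z) + deltaDim p (Z ⟶ Z)) := by
      rw [deltaDim_congr p (homBiprodIn (X ⊞ Z) Y Z), deltaDim_prod p hp,
        deltaDim_congr p (homBiprodOut X Z Y), deltaDim_congr p (homBiprodOut X Z Z),
        deltaDim_prod p hp, deltaDim_prod p hp]
    have eq4 : deltaDim p (Z ⟶ (X ⊞ Z)) = deltaDim p (Z ⟶ (Y ⊞ Z)) :=
      deltaDim_congr p (homPostcomp Z e)
    have eq5 : deltaDim p (Z ⟶ (X ⊞ Z)) = deltaDim p (Z ⟶ X) + deltaDim p (Z ⟶ Z) := by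
      rw [deltaDim_congr p (homBiprodIn Z X Z), deltaDim_prod p hp]
    have eq6 : deltaDim p (Z ⟶ (Y ⊞ Z)) = deltaDim p (Z ⟶ Y) + deltaDim p (Z ⟶ Z) := by
      rw [deltaDim_congr p (homBiprodIn Z Y Z), deltaDim_prod p hp]
    omega
  constructor
  · exact fun p hp => key p hp
  · rw [sInf_eq_addGroupRank, sInf_eq_addGroupRank]
    obtain ⟨p, hp, h1⟩ := exists_prime_rank_le (X ⟶ X)
    obtain ⟨q, hq, h2⟩ := exists_prime_rank_le (X ⟶ Y)
    have l1 := deltaDim_le_rank p hp (X ⟶ Y)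
    have l2 := deltaDim_le_rank q hq (X ⟶ X)
    have k1 := key p hp
    have k2 := key q hq
    omega
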